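/- Let n ≥ 2, m ≥ 1, q a primitive n²-th root of unity, and a_{ij} ∈ Z/n²Z. The function Ψ : (Z_n^m)³ → C^*, Ψ(β,γ,δ) = Π_{i,j=1}^m q^{a_{ij} β_i ((γ_j+δ_j)' - γ_j - δ_j)} (components of β,γ,δ taken in {0,...,n-1}, (γ_j+δ_j)' the remainder mod n), is a 3-cocycle on Z_n^m. Moreover, if a_{ii} is not congruent to 0 mod n for some i, then the restriction of Ψ to the i-th cyclic factor Z_n is a nontrivial 3-cocycle, so Ψ represents a nontrivial cohomology class in H³(Z_n^m, C^*). -/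
import Mathlib

/-- The "carry defect": `((x+y) mod n) - x - y` on values. -/
def eAux (n : ℕ) (x y : ZMod n) : ℤ :=
  (((x.val : ℤ) + (y.val : ℤ)) % (n : ℤ)) - (x.val : ℤ) - (y.val : ℤ)

lemma eAux_dvd (n : ℕ) (x y : ZMod n) : (n : ℤ) ∣ eAux n x y := by
  refine ⟨-(((x.val : ℤ) + y.val) / n), ?_⟩
  simp only [eAux]
  rw [Int.emod_def]
  ring

lemma eAux_eq (n : ℕ) [NeZero n] (x y : ZMod n) :
    eAux n x y = ((x + y).val : ℤ) - x.val - y.val := by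
  simp only [eAux, ZMod.val_add]
  push_cast
  ring

lemma val_add_int (n : ℕ) [NeZero n] (x y : ZMod n) :
    (((x + y).val : ℤ)) = x.val + y.val + eAux n x y := by
  rw [eAux_eq]; ring

lemma eAux_cocycle (n : ℕ) [NeZero n] (x y z : ZMod n) :
    eAux n x y + eAux n (x + y) z = eAux n y z + eAux n x (y + z) := by
  simp only [eAux_eq]
  rw [add_assoc]
  ring

lemma prod_q_zpow {ι : Type*} (q : ℂ) (hq : q ≠ 0) (s : Finset ι) (f : ι → ℤ) :
    ∏ x ∈ s, q ^ f x = q ^ (∑ x ∈ s, f x) := by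
  classical
  induction s using Finset.cons_induction with
  | empty => simp
  | cons a s ha ih => rw [Finset.prod_cons, Finset.sum_cons, ih, zpow_add₀ hq]

/-- For `q` a primitive `n²`-th root of unity and residues `a_{ij}` mod `n²`,
the function `Ψ(β,γ,δ) = Π_{i,j} q^{a_{ij} β_i ((γ_j+δ_j)' - γ_j - δ_j)}` on
`(ℤ_n^m)³` (components taken in `{0,…,n-1}`) is a 3-cocycle on `ℤ_n^m`;
moreover, if some `a_{ii} ≢ 0 (mod n)`, then `Ψ` is not a coboundary, i.e. it
represents a nontrivial class in `H³(ℤ_n^m, ℂ*)`. -/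
theorem assoc_cocycle_multivariable
    (n m : ℕ) (hn : 2 ≤ n) (hm : 1 ≤ m)
    (q : ℂ) (hq : IsPrimitiveRoot q (n ^ 2))
    (a : Fin m → Fin m → ZMod (n ^ 2))
    (Ψ : (Fin m → ZMod n) → (Fin m → ZMod n) → (Fin m → ZMod n) → ℂ)
    (hΨ : ∀ β γ δ : Fin m → ZMod n,
      Ψ β γ δ = ∏ i : Fin m, ∏ j : Fin m,
        q ^ (((a i j).val : ℤ) * ((β i).val : ℤ) *
          ((((γ j).val : ℤ) + ((δ j).val : ℤ)) % (n : ℤ)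
            - ((γ j).val : ℤ) - ((δ j).val : ℤ)))) :
    (∀ β γ δ ε : Fin m → ZMod n,
      Ψ γ δ ε * Ψ β (γ + δ) ε * Ψ β γ δ = Ψ (β + γ) δ ε * Ψ β γ (δ + ε)) ∧
    ((∃ i : Fin m,
        ZMod.castHom (dvd_pow_self n two_ne_zero) (ZMod n) (a i i) ≠ 0) →
      ¬ ∃ b : (Fin m → ZMod n) → (Fin m → ZMod n) → ℂ,
          (∀ x y, b x y ≠ 0) ∧
          ∀ β γ δ : Fin m → ZMod n,
            Ψ β γ δ = b γ δ * b β (γ + δ) / (b (β + γ) δ * b β γ)) := by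
  have hnz : NeZero n := ⟨by omega⟩
  have hq0 : q ≠ 0 := hq.ne_zero (by positivity)
  -- single-exponent form
  set E : (Fin m → ZMod n) → (Fin m → ZMod n) → (Fin m → ZMod n) → ℤ :=
    fun β γ δ => ∑ i : Fin m, ∑ j : Fin m,
      ((a i j).val : ℤ) * ((β i).val : ℤ) * eAux n (γ j) (δ j) with hE
  have hΨ' : ∀ β γ δ, Ψ β γ δ = q ^ E β γ δ := by
    intro β γ δ
    rw [hΨ β γ δ, hE]
    simp only [prod_q_zpow q hq0]
    rfl
  have hper : ∀ X Y : ℤ, ((n : ℤ))^2 ∣ X - Y → q ^ X = q ^ Y := by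
    intro X Y ⟨k, hk⟩
    have hX : X = Y + ((n:ℤ))^2 * k := by linarith
    have h1 : q ^ (((n:ℤ))^2 * k) = 1 := by
      rw [zpow_mul]
      have : q ^ ((n:ℤ)^2) = 1 := by
        have := hq.pow_eq_one
        rw [← this]
        norm_cast
      rw [this, one_zpow]
    rw [hX, zpow_add₀ hq0, h1, mul_one]
  constructor
  · intro β γ δ ε
    rw [hΨ' γ δ ε, hΨ' β (γ+δ) ε, hΨ' β γ δ, hΨ' (β+γ) δ ε, hΨ' β γ (δ+ε),
      ← zpow_add₀ hq0, ← zpow_add₀ hq0, ← zpow_add₀ hq0]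
    apply hper
    have key : (E γ δ ε + E β (γ + δ) ε + E β γ δ) - (E (β + γ) δ ε + E β γ (δ + ε)) =
        ∑ i : Fin m, ∑ j : Fin m,
          -(((a i j).val : ℤ) * eAux n (β i) (γ i) * eAux n (δ j) (ε j)) := by
      simp only [hE, ← Finset.sum_add_distrib, ← Finset.sum_sub_distrib]
      refine Finset.sum_congr rfl fun i _ => ?_
      refine Finset.sum_congr rfl fun j _ => ?_
      simp only [Pi.add_apply]
      have h1 := val_add_int n (β i) (γ i)
      have h2 := eAux_cocycle n (γ j) (δ j) (ε j)
      linear_combination (((a i j).val : ℤ) * ((β i).val : ℤ)) * h2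
        - (((a i j).val : ℤ) * eAux n (δ j) (ε j)) * h1
    rw [key]
    refine Finset.dvd_sum fun i _ => Finset.dvd_sum fun j _ => ?_
    obtain ⟨k, hk⟩ := eAux_dvd n (β i) (γ i)
    obtain ⟨l, hl⟩ := eAux_dvd n (δ j) (ε j)
    exact ⟨-(((a i j).val : ℤ) * k * l), by rw [hk, hl]; ring⟩
  · rintro ⟨i, hi⟩ ⟨b, hb0, hb⟩
    haveI : Fact (1 < n) := ⟨by omega⟩
    classical
    set v : ZMod n → (Fin m → ZMod n) := fun x => Pi.single i x with hv
    have hvadd : ∀ x y : ZMod n, v x + v y = v (x + y) := by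
      intro x y; rw [hv]; simp [← Pi.single_add]
    -- value of Ψ on the i-th cyclic factor
    have hΨv : ∀ y : ZMod n, Ψ (v 1) (v y) (v 1) =
        q ^ (((a i i).val : ℤ) * eAux n y 1) := by
      intro y
      rw [hΨ' (v 1) (v y) (v 1)]
      congr 1
      rw [hE]
      beta_reduce
      rw [Finset.sum_eq_single i
        (fun i' _ hi' => ?_) (by simp)]
      · rw [Finset.sum_eq_single i (fun j' _ hj' => ?_) (by simp)]
        · simp [v, Pi.single_eq_same, ZMod.val_one]
        · simp [v, Pi.single_eq_of_ne hj', eAux]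
      · refine Finset.sum_eq_zero fun j' _ => ?_
        simp [v, Pi.single_eq_of_ne hi']
    -- product of Ψ over the factor
    have hprodΨ : ∏ y : ZMod n, Ψ (v 1) (v y) (v 1) =
        q ^ (((a i i).val : ℤ) * ∑ y : ZMod n, eAux n y 1) := by
      simp only [hΨv]
      rw [prod_q_zpow q hq0, ← Finset.mul_sum]
    have hsum : ∑ y : ZMod n, eAux n y 1 = -(n : ℤ) := by
      have h1 : ∀ y : ZMod n, eAux n y 1 = ((y + 1).val : ℤ) - (y.val : ℤ) - 1 := by
        intro y
        rw [eAux_eq, ZMod.val_one]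
        push_cast
        ring
      simp only [h1]
      rw [Finset.sum_sub_distrib, Finset.sum_sub_distrib]
      have h2 : ∑ y : ZMod n, (((y + 1).val : ℤ)) = ∑ y : ZMod n, ((y.val : ℤ)) :=
        Equiv.sum_comp (Equiv.addRight (1 : ZMod n)) (fun z => ((z.val : ℤ)))
      rw [h2]
      simp [Finset.card_univ, ZMod.card]
    -- product of the coboundary over the factor is 1
    have hprodb : ∏ y : ZMod n,
        (b (v y) (v 1) * b (v 1) (v y + v 1) / (b (v 1 + v y) (v 1) * b (v 1) (v y))) = 1 := by
      simp only [Finset.prod_div_distrib, Finset.prod_mul_distrib]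
      have e1 : ∏ y : ZMod n, b (v 1 + v y) (v 1) = ∏ y : ZMod n, b (v y) (v 1) := by
        simp only [hvadd]
        exact Equiv.prod_comp (Equiv.addLeft (1 : ZMod n)) (fun z => b (v z) (v 1))
      have e2 : ∏ y : ZMod n, b (v 1) (v y + v 1) = ∏ y : ZMod n, b (v 1) (v y) := by
        simp only [hvadd]
        exact Equiv.prod_comp (Equiv.addRight (1 : ZMod n)) (fun z => b (v 1) (v z))
      rw [e1, e2]
      apply div_self
      apply mul_ne_zero <;> exact Finset.prod_ne_zero_iff.mpr fun y _ => hb0 _ _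
    have hone : q ^ (((a i i).val : ℤ) * (-(n : ℤ))) = 1 := by
      rw [← hsum, ← hprodΨ]
      calc ∏ y : ZMod n, Ψ (v 1) (v y) (v 1)
          = ∏ y : ZMod n,
            (b (v y) (v 1) * b (v 1) (v y + v 1) / (b (v 1 + v y) (v 1) * b (v 1) (v y))) := by
            refine Finset.prod_congr rfl fun y _ => ?_
            exact hb (v 1) (v y) (v 1)
        _ = 1 := hprodb
    have hdvd : ((n : ℤ))^2 ∣ ((a i i).val : ℤ) * n := by
      have h := (hq.zpow_eq_one_iff_dvd (((a i i).val : ℤ) * (-(n : ℤ)))).mp hone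
      push_cast at h
      rwa [mul_neg, dvd_neg] at h
    have hdvd' : n ∣ (a i i).val := by
      have hn0 : (0:ℤ) < n := by exact_mod_cast (by omega : 0 < n)
      have : (n : ℤ) ∣ ((a i i).val : ℤ) := by
        rcases hdvd with ⟨k, hk⟩
        refine ⟨k, ?_⟩
        have : ((a i i).val : ℤ) * n = (n : ℤ) * k * n := by rw [hk]; ring
        exact mul_right_cancel₀ (ne_of_gt hn0) this
      exact_mod_cast this
    apply hi
    have : (ZMod.castHom (dvd_pow_self n two_ne_zero) (ZMod n)) (a i i)
        = (((a i i).val : ℕ) : ZMod n) := by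
      rw [ZMod.castHom_apply, ZMod.natCast_val]
    rw [this, ZMod.natCast_eq_zero_iff]
    exact hdvd'
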